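/- For all n >= 1 and k >= 0: μ(N|_{2n}, k, J*) ≡ 0 (mod 2) if k is odd, and μ(N|_{2n}, k, J*) ≡ μ(P|_n, k/2, J*) (mod 2) if k is even. -/

import Mathlib

/-- `P = {k : k ≡ 0 or 3 (mod 4)}`. -/
def Pset : Set ℕ := {k | k % 4 = 0 ∨ k % 4 = 3}

/-- `Q = {k : k ≡ 1 or 2 (mod 4)}`. -/
def Qset : Set ℕ := {k | k % 4 = 1 ∨ k % 4 = 2}

/-- `J = {(2n+1)·4^j − 1 : n, j ≥ 0}`. -/
def Jset : Set ℕ := {m | ∃ n j : ℕ, (2 * n + 1) * 4 ^ j - 1 = m}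

/-- `J* = {(2n+1)·4^j − 1 : n ≥ 0, j ≥ 1}`. -/
def Jstar : Set ℕ := {m | ∃ n j : ℕ, 1 ≤ j ∧ (2 * n + 1) * 4 ^ j - 1 = m}

/-- `L = ℕ \ J*`. -/
def Lset : Set ℕ := Jstarᶜ

/-- `A|_m`: the finite set of the `m` smallest elements of `A`. -/
noncomputable def smallest (A : Set ℕ) (m : ℕ) : Finset ℕ :=
  (Finset.range m).image (Nat.nth (· ∈ A))

/-- The map `β`: `β l = 2l` if `l` even, `2l + 1` if `l` odd. -/
def beta (l : ℕ) : ℕ := if Even l then 2 * l else 2 * l + 1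

/-- `μ(A, k, B)`: the number of involutions of the finite set `A` (permutations of `ℕ`
fixing everything outside `A` and equal to their own inverse) having exactly `k`
transpositions, all of whose transpositions `(c, d)` satisfy `c + d ∈ B`. -/
noncomputable def mu (A : Finset ℕ) (k : ℕ) (B : Set ℕ) : ℕ :=
  Nat.card {σ : Equiv.Perm ℕ // σ * σ = 1 ∧ (∀ x, σ x ≠ x → x ∈ A) ∧
    (A.filter fun x => σ x ≠ x).card = 2 * k ∧ ∀ c, σ c ≠ c → c + σ c ∈ B}


lemma beta_def (a : ℕ) : beta a = if a % 2 = 0 then 2*a else 2*a+1 := by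
  simp [beta, Nat.even_iff]

lemma beta_div2 (a : ℕ) : beta a / 2 = a := by rw [beta_def]; split <;> omega

lemma beta_mod2 (a : ℕ) : beta a % 2 = a % 2 := by rw [beta_def]; split <;> omega

lemma beta_mem (a : ℕ) : beta a % 4 = 0 ∨ beta a % 4 = 3 := by rw [beta_def]; split <;> omega

lemma beta_of_mod {m : ℕ} (hm : m % 4 = 0 ∨ m % 4 = 3) : beta (m / 2) = m := by
  rw [beta_def]; split <;> omega

lemma beta_inj : Function.Injective beta := fun a b h => by
  rw [← beta_div2 a, ← beta_div2 b, h]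

lemma beta_add {a b : ℕ} (h : (beta a + beta b) % 2 = 1) :
    beta a + beta b = 2*(a+b) + 1 := by
  rw [beta_def, beta_def] at h ⊢
  by_cases h1 : a % 2 = 0 <;> by_cases h2 : b % 2 = 0 <;> simp [h1, h2] at h ⊢ <;> omega

lemma jstar_mod4 {m : ℕ} (hm : m ∈ Jstar) : m % 4 = 3 := by
  obtain ⟨a, j, hj, rfl⟩ := hm
  have h4 : (4:ℕ) ∣ (2*a+1) * 4 ^ j := Dvd.dvd.mul_left (dvd_pow_self 4 (by omega)) _
  have hpos : 1 ≤ (2*a+1) * 4 ^ j := Nat.one_le_iff_ne_zero.2 (by positivity)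
  obtain ⟨c, hc⟩ := h4
  omega

lemma Pset_eq : (· ∈ Pset) = fun k => k % 4 = 0 ∨ k % 4 = 3 := rfl

instance : DecidablePred (· ∈ Pset) := fun k =>
  inferInstanceAs (Decidable (k % 4 = 0 ∨ k % 4 = 3))

lemma count_beta (i : ℕ) : Nat.count (· ∈ Pset) (beta i) = i := by
  induction i with
  | zero => have h0 : beta 0 = 0 := by rw [beta_def]; simp
            rw [h0, Nat.count_zero]
  | succ i ih =>
    by_cases hp : i % 2 = 0
    · have h1 : beta i = 2*i := by rw [beta_def, if_pos hp]
      have h2 : beta (i+1) = 2*i + 2 + 1 := by rw [beta_def]; split <;> omega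
      rw [h2, Nat.count_succ, show 2*i+2 = (2*i+1)+1 from rfl, Nat.count_succ,
        show 2*i+1 = (2*i)+1 from rfl, Nat.count_succ, ← h1, ih]
      have e1 : ¬ ((2*i) % 4 = 0 ∨ (2*i) % 4 = 3) ∨ ((2*i) % 4 = 0 ∨ (2*i) % 4 = 3) := em' _
      simp only [Pset_eq]
      have : (2*i) % 4 = 0 := by omega
      have : (2*i+1) % 4 = 1 := by omega
      have : (2*i+2) % 4 = 2 := by omega
      simp_all
    · have h1 : beta i = 2*i+1 := by rw [beta_def]; split <;> omega
      have h2 : beta (i+1) = 2*i + 1 + 1 := by rw [beta_def]; split <;> omega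
      rw [h2, Nat.count_succ, ← h1, ih]
      simp only [Pset_eq]
      have : (2*i+1) % 4 = 3 := by omega
      simp_all

lemma nth_Pset (i : ℕ) : Nat.nth (· ∈ Pset) i = beta i := by
  have := Nat.nth_count (p := (· ∈ Pset)) (n := beta i) (beta_mem i)
  rwa [count_beta] at this

lemma smallest_Pset (n : ℕ) : smallest Pset n = (Finset.range n).image beta := by
  unfold smallest
  apply Finset.image_congr
  intro x _
  exact nth_Pset x


lemma even_card_invol {α : Type*} [DecidableEq α] (s : Finset α) (f : α → α)
    (hmem : ∀ a ∈ s, f a ∈ s) (hinv : ∀ a ∈ s, f (f a) = a) (hne : ∀ a ∈ s, f a ≠ a) :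
    Even s.card := by
  induction s using Finset.strongInduction with
  | _ s ih =>
    rcases s.eq_empty_or_nonempty with rfl | ⟨a, ha⟩
    · simp
    · have hfa : f a ∈ s := hmem a ha
      set t := s \ {a, f a} with ht
      have hts : t ⊂ s := by
        constructor
        · exact Finset.sdiff_subset
        · intro hsub
          have := hsub ha
          simp [ht] at this
      have hcard : s.card = t.card + 2 := by
        have : ({a, f a} : Finset α) ⊆ s := by
          intro x hx; simp at hx; rcases hx with rfl | rfl <;> assumption
        rw [ht, Finset.card_sdiff_of_subset this, Finset.card_pair (Ne.symm (hne a ha))]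
        have h2 : 2 ≤ s.card := by
          rw [← Finset.card_pair (Ne.symm (hne a ha))]
          exact Finset.card_le_card this
        omega
      have hrec : Even t.card := by
        apply ih t hts
        · intro b hb
          simp only [ht, Finset.mem_sdiff, Finset.mem_insert, Finset.mem_singleton] at hb ⊢
          obtain ⟨hbs, hbne⟩ := hb
          push_neg at hbne
          refine ⟨hmem b hbs, fun h => ?_⟩
          rcases h with h | h
          · have h2 := hinv b hbs; rw [h] at h2
            exact hbne.2 h2.symm
          · have h2 := hinv b hbs; rw [h, hinv a ha] at h2
            exact hbne.1 h2.symm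
        · intro b hb; exact hinv b (Finset.mem_sdiff.1 hb).1
        · intro b hb; exact hne b (Finset.mem_sdiff.1 hb).1
      obtain ⟨m, hm⟩ := hrec
      exact ⟨m+1, by omega⟩
      
lemma natCard_modEq_fixed {α : Type*} [Finite α] (f : α → α) (hf : Function.Involutive f) :
    Nat.card α ≡ Nat.card {x : α // f x = x} [MOD 2] := by
  classical
  have := Fintype.ofFinite α
  rw [Nat.card_eq_fintype_card, Nat.card_eq_fintype_card, Fintype.card_subtype]
  have hsplit := Finset.card_filter_add_card_filter_not
    (s := (Finset.univ : Finset α)) (p := fun x => f x = x)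
  have heven : Even ((Finset.univ.filter fun x => ¬ f x = x) : Finset α).card := by
    apply even_card_invol _ f
    · intro a hha; simp only [Finset.mem_filter, Finset.mem_univ, true_and] at hha ⊢
      intro h; apply hha; conv_lhs => rw [← h]
      rw [hf]
    · intro a _; exact hf a
    · intro a hha; simp only [Finset.mem_filter] at hha; exact fun h => hha.2 h
  simp only [Finset.card_univ] at hsplit
  obtain ⟨m, hm⟩ := heven
  unfold Nat.ModEq
  omega

open Finset

/-- the pairing permutation `x ↦ x xor 1`. -/
def tf (x : ℕ) : ℕ := if x % 2 = 0 then x + 1 else x - 1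

lemma tf_invol : Function.Involutive tf := by
  intro x; unfold tf; split <;> split <;> omega

def tp : Equiv.Perm ℕ := tf_invol.toPerm

lemma tp_apply (x : ℕ) : tp x = tf x := rfl

def Cpred (A : Finset ℕ) (k : ℕ) (B : Set ℕ) (σ : Equiv.Perm ℕ) : Prop :=
  σ * σ = 1 ∧ (∀ x, σ x ≠ x → x ∈ A) ∧
    (A.filter fun x => σ x ≠ x).card = 2 * k ∧ ∀ c, σ c ≠ c → c + σ c ∈ B

lemma invol_apply {σ : Equiv.Perm ℕ} (h : σ * σ = 1) (x : ℕ) : σ (σ x) = x := by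
  rw [← Equiv.Perm.mul_apply, h, Equiv.Perm.one_apply]

lemma mul_self_of_invol {f : ℕ → ℕ} (hf : Function.Involutive f) :
    hf.toPerm * hf.toPerm = 1 :=
  Equiv.ext fun x => by simp [Equiv.Perm.mul_apply, hf x]

lemma sigma_mem_of {σ : Equiv.Perm ℕ} {A : Finset ℕ} (h1 : σ * σ = 1)
    (h2 : ∀ x, σ x ≠ x → x ∈ A) {a : ℕ} (ha : a ∈ A) : σ a ∈ A := by
  by_cases hx : σ a = a
  · rwa [hx]
  · exact h2 _ (by rw [invol_apply h1]; exact Ne.symm hx)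

instance Cpred_finite (A : Finset ℕ) (k : ℕ) (B : Set ℕ) :
    Finite {σ : Equiv.Perm ℕ // Cpred A k B σ} := by
  refine Finite.of_injective
    (fun σh => fun a : A => (⟨σh.1 a.1, sigma_mem_of σh.2.1 σh.2.2.1 a.2⟩ : A)) ?_
  intro σ1 σ2 h
  apply Subtype.ext; apply Equiv.ext; intro x
  by_cases hx : x ∈ A
  · exact congrArg Subtype.val (congrFun h ⟨x, hx⟩)
  · have e1 : σ1.1 x = x := by
      by_contra hne; exact hx (σ1.2.2.1 x hne)
    have e2 : σ2.1 x = x := by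
      by_contra hne; exact hx (σ2.2.2.1 x hne)
    rw [e1, e2]

lemma tf_mem_range {n x : ℕ} (hx : x ∈ range (2*n)) : tf x ∈ range (2*n) := by
  simp only [mem_range] at *
  unfold tf; split <;> omega

lemma tf_add {u v : ℕ} (h : (u + v) % 2 = 1) : tf u + tf v = u + v := by
  unfold tf; split <;> split <;> omega

lemma conj_Cpred {n k : ℕ} {σ : Equiv.Perm ℕ} (h : Cpred (range (2*n)) k Jstar σ) :
    Cpred (range (2*n)) k Jstar (tp * σ * tp) := by
  obtain ⟨h1, h2, h3, h4⟩ := h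
  have happ : ∀ x, (tp * σ * tp) x = tf (σ (tf x)) := fun x => rfl
  have hmoved : ∀ x, (tp * σ * tp) x ≠ x ↔ σ (tf x) ≠ tf x := by
    intro x
    rw [happ]
    constructor
    · intro hne hc; exact hne (by rw [hc, tf_invol])
    · intro hne hc
      apply hne
      have := congrArg tf hc
      rwa [tf_invol] at this
  refine ⟨?_, ?_, ?_, ?_⟩
  · apply Equiv.ext; intro x
    have : ∀ y, (tp * σ * tp) y = tf (σ (tf y)) := fun _ => rfl
    rw [Equiv.Perm.mul_apply, this, this, tf_invol, invol_apply h1, tf_invol,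
      Equiv.Perm.one_apply]
  · intro x hx
    rw [hmoved] at hx
    have := h2 _ hx
    simp only [mem_range] at this ⊢
    unfold tf at this; split at this <;> omega
  · rw [← h3]
    apply Finset.card_bij' (fun a _ => tf a) (fun b _ => tf b)
    · intro a ha
      simp only [mem_filter] at ha ⊢
      exact ⟨tf_mem_range ha.1, (hmoved a).1 ha.2⟩
    · intro b hb
      simp only [mem_filter] at hb ⊢
      refine ⟨tf_mem_range hb.1, ?_⟩
      rw [hmoved, tf_invol]
      exact hb.2
    · intro a _; exact tf_invol a
    · intro b _; exact tf_invol b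
  · intro c hc
    rw [hmoved] at hc
    have hsum := h4 _ hc
    have hm4 := jstar_mod4 hsum
    rw [happ]
    have heq : tf (tf c) + tf (σ (tf c)) = tf c + σ (tf c) :=
      tf_add (by omega)
    rw [tf_invol] at heq
    rw [heq]
    exact hsum

/-- the "doubling" map from a permutation of `β`-values to a permutation of pairs. -/
def Ffun (τ : Equiv.Perm ℕ) (x : ℕ) : ℕ :=
  if τ (beta (x / 2)) = beta (x / 2) then x else 2 * (τ (beta (x / 2)) / 2) + 1 - x % 2

section F
variable {n : ℕ} {τ : Equiv.Perm ℕ}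
  (hinv : ∀ x, τ (τ x) = x)
  (hsupp : ∀ m, τ m ≠ m → m ∈ (Finset.range n).image beta)

include hinv hsupp in
lemma moved_form {a : ℕ} (h : τ (beta a) ≠ beta a) :
    beta (τ (beta a) / 2) = τ (beta a) ∧ τ (beta a) / 2 ≠ a := by
  have hm : τ (τ (beta a)) ≠ τ (beta a) := by rw [hinv]; exact Ne.symm h
  obtain ⟨b, _, hb⟩ := Finset.mem_image.1 (hsupp _ hm)
  constructor
  · rw [← hb, beta_div2, hb]
  · intro hc
    exact h (by rw [← hb, beta_div2] at hc; rw [← hb, hc])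

include hinv hsupp in
lemma Ffun_invol : Function.Involutive (Ffun τ) := by
  intro x
  by_cases h : τ (beta (x / 2)) = beta (x / 2)
  · simp [Ffun, h]
  · obtain ⟨hb, hne⟩ := moved_form hinv hsupp h
    set b := τ (beta (x / 2)) / 2 with hbdef
    have hx1 : Ffun τ x = 2 * b + 1 - x % 2 := by
      rw [Ffun, if_neg h]
    have hdiv : (2 * b + 1 - x % 2) / 2 = b := by omega
    have hτb : τ (beta b) = beta (x / 2) := by rw [hb, hinv]
    have hneq : τ (beta b) ≠ beta b := by
      rw [hτb, hb]
      intro hc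
      exact h (by rw [← hc])
    rw [hx1, Ffun, hdiv, if_neg hneq, hτb, beta_div2]
    omega

include hinv hsupp in
lemma Ffun_moved_iff (x : ℕ) : Ffun τ x ≠ x ↔ τ (beta (x / 2)) ≠ beta (x / 2) := by
  constructor
  · intro hm hc
    exact hm (by rw [Ffun, if_pos hc])
  · intro h
    obtain ⟨hb, hne⟩ := moved_form hinv hsupp h
    rw [Ffun, if_neg h]
    intro hc
    apply hne
    omega

lemma card_filter_halves (n : ℕ) (p : ℕ → Prop) [DecidablePred p] :
    ((Finset.range (2*n)).filter fun x => p (x/2)).card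
      = 2 * ((Finset.range n).filter p).card := by
  induction n with
  | zero => simp
  | succ n ih =>
    rw [show 2*(n+1) = (2*n+1)+1 by ring, Finset.range_add_one, Finset.range_add_one,
      Finset.range_add_one, Finset.filter_insert, Finset.filter_insert, Finset.filter_insert,
      show (2*n+1)/2 = n by omega, show (2*n)/2 = n by omega]
    by_cases hp : p n
    · rw [if_pos hp, if_pos hp, if_pos hp]
      rw [Finset.card_insert_of_notMem (by simp), Finset.card_insert_of_notMem (by
        simp only [Finset.mem_insert, Finset.mem_filter, Finset.mem_range]; omega),
        Finset.card_insert_of_notMem (by simp), ih]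
      ring
    · rw [if_neg hp, if_neg hp, if_neg hp, ih]

include hinv hsupp in
lemma card_rel :
    ((Finset.range (2*n)).filter fun x => Ffun τ x ≠ x).card
      = 2 * (((Finset.range n).image beta).filter fun m => τ m ≠ m).card := by
  have e1 : ((Finset.range (2*n)).filter fun x => Ffun τ x ≠ x)
      = (Finset.range (2*n)).filter fun x => τ (beta (x/2)) ≠ beta (x/2) :=
    Finset.filter_congr fun x _ => by rw [Ffun_moved_iff hinv hsupp]
  rw [e1, card_filter_halves n (fun a => τ (beta a) ≠ beta a), Finset.filter_image,
    Finset.card_image_of_injective _ beta_inj]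

end F

lemma tf_div2 (x : ℕ) : tf x / 2 = x / 2 := by unfold tf; split <;> omega

section F2
variable {n k' : ℕ} {τ : Equiv.Perm ℕ}
  (hC : Cpred ((Finset.range n).image beta) k' Jstar τ)

include hC in
lemma F_Cpred :
    Cpred (Finset.range (2*n)) (2*k') Jstar
      ((Ffun_invol (fun x => invol_apply hC.1 x) hC.2.1).toPerm) ∧
    tp * ((Ffun_invol (fun x => invol_apply hC.1 x) hC.2.1).toPerm) * tp
      = (Ffun_invol (fun x => invol_apply hC.1 x) hC.2.1).toPerm := by
  obtain ⟨h1, h2, h3, h4⟩ := hC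
  have hinv : ∀ x, τ (τ x) = x := fun x => invol_apply h1 x
  set σ := (Ffun_invol hinv h2).toPerm with hσ
  have happ : ∀ x, σ x = Ffun τ x := fun _ => rfl
  refine ⟨⟨mul_self_of_invol _, ?_, ?_, ?_⟩, ?_⟩
  · intro x hx
    rw [happ] at hx
    rw [Ffun_moved_iff hinv h2] at hx
    have := h2 _ hx
    obtain ⟨b, hb, hba⟩ := Finset.mem_image.1 this
    have hbx : b = x / 2 := beta_inj hba
    simp only [Finset.mem_range] at hb ⊢
    omega
  · have e1 : (Finset.range (2*n)).filter (fun x => σ x ≠ x)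
        = (Finset.range (2*n)).filter (fun x => Ffun τ x ≠ x) := by
      apply Finset.filter_congr; intro x _; rw [happ]
    rw [e1, card_rel hinv h2, h3]
  · intro c hc
    rw [happ] at hc ⊢
    rw [Ffun_moved_iff hinv h2] at hc
    obtain ⟨hb, hne⟩ := moved_form hinv h2 hc
    have hsum := h4 _ hc
    have hm4 := jstar_mod4 hsum
    have hm2 : (beta (c/2) + beta (τ (beta (c/2)) / 2)) % 2 = 1 := by rw [hb]; omega
    have hab := beta_add hm2
    have e2 : Ffun τ c = 2 * (τ (beta (c/2)) / 2) + 1 - c % 2 := by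
      rw [Ffun, if_neg hc]
    rw [e2]
    have e3 : c + (2 * (τ (beta (c/2)) / 2) + 1 - c % 2)
        = beta (c/2) + τ (beta (c/2)) := by
      rw [← hb, hab]; omega
    rw [e3]
    exact hsum
  · apply Equiv.ext; intro x
    have e0 : (tp * σ * tp) x = tf (σ (tf x)) := rfl
    rw [e0, happ, happ]
    have ha : tf x / 2 = x / 2 := tf_div2 x
    by_cases h : τ (beta (x/2)) = beta (x/2)
    · rw [Ffun, ha, if_pos h, tf_invol, Ffun, if_pos h]
    · rw [Ffun, ha, if_neg h, Ffun, if_neg h]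
      unfold tf
      split_ifs <;> omega

end F2

/-- inverse construction: from a paired permutation back to a `β`-values permutation. -/
def Gfun (σ : Equiv.Perm ℕ) (m : ℕ) : ℕ :=
  if m % 4 = 0 ∨ m % 4 = 3 then beta (σ (2 * (m / 2)) / 2) else m

section G
variable {n : ℕ} {σ : Equiv.Perm ℕ} (h1 : σ * σ = 1)
  (h2 : ∀ x, σ x ≠ x → x ∈ Finset.range (2*n))
  (h4 : ∀ c, σ c ≠ c → c + σ c ∈ Jstar)
  (hfix : tp * σ * tp = σ)

include hfix in
lemma hstep (a : ℕ) : σ (2*a+1) = tf (σ (2*a)) := by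
  have := (Equiv.ext_iff.1 hfix (2*a+1)).symm
  have e0 : (tp * σ * tp) (2*a+1) = tf (σ (tf (2*a+1))) := rfl
  rw [e0, show tf (2*a+1) = 2*a from by unfold tf; split <;> omega] at this
  exact this

include h4 in
lemma G_odd {a : ℕ} (hm : σ (2*a) ≠ 2*a) : σ (2*a) % 2 = 1 ∧ σ (2*a) ≠ 2*a+1 := by
  have := jstar_mod4 (h4 _ hm)
  omega

include h1 h4 hfix in
lemma G_invol : Function.Involutive (Gfun σ) := by
  intro m
  by_cases hp : m % 4 = 0 ∨ m % 4 = 3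
  · have hba : beta (m/2) = m := beta_of_mod hp
    by_cases hd : σ (2*(m/2)) = 2*(m/2)
    · have e : Gfun σ m = m := by
        rw [Gfun, if_pos hp, hd, show 2*(m/2)/2 = m/2 from by omega, hba]
      rw [e, e]
    · obtain ⟨hodd, hne⟩ := G_odd h4 hd
      set a := m / 2 with hadef
      set d := σ (2*a) with hddef
      set b := d / 2 with hbdef
      have hdb : d = 2*b + 1 := by omega
      have e : Gfun σ m = beta b := by rw [Gfun, if_pos hp]
      rw [e]
      have hσd : σ d = 2*a := by rw [hddef, invol_apply h1]
      have hstep' := hstep hfix b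
      rw [← hdb, hσd] at hstep'
      have hσ2b : σ (2*b) = 2*a + 1 := by
        have := congrArg tf hstep'
        rw [tf_invol] at this
        rw [← this]
        unfold tf; split <;> omega
      rw [Gfun, if_pos (beta_mem b), beta_div2, hσ2b,
        show (2*a+1)/2 = a from by omega, hba]
  · have e : Gfun σ m = m := by rw [Gfun, if_neg hp]
    rw [e, e]

omit h2 in
include h1 h4 hfix in
lemma FG (x : ℕ) : Ffun ((G_invol h1 h4 hfix).toPerm) x = σ x := by
  set τg := (G_invol h1 h4 hfix).toPerm with hτg
  have hgapp : ∀ m, τg m = Gfun σ m := fun _ => rfl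
  set a := x / 2 with hadef
  have hτβ : τg (beta a) = beta (σ (2*a) / 2) := by
    rw [hgapp, Gfun, if_pos (beta_mem a), beta_div2]
  by_cases hd : σ (2*a) = 2*a
  · have hfixv : τg (beta a) = beta a := by
      rw [hτβ, hd, show 2*a/2 = a from by omega]
    have e : Ffun τg x = x := by rw [Ffun, ← hadef, if_pos hfixv]
    rw [e]
    have hx : x = 2*a + x % 2 := by omega
    rcases (by omega : x % 2 = 0 ∨ x % 2 = 1) with h0 | h0
    · rw [show x = 2*a from by omega, hd]
    · rw [show x = 2*a+1 from by omega, hstep hfix a, hd]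
      unfold tf; split <;> omega
  · obtain ⟨hodd, hne⟩ := G_odd h4 hd
    set d := σ (2*a) with hddef
    set b := d / 2 with hbdef
    have hdb : d = 2*b + 1 := by omega
    have hmoved : τg (beta a) ≠ beta a := by
      rw [hτβ]
      intro hc
      have := beta_inj hc
      omega
    have e : Ffun τg x = 2 * (τg (beta a) / 2) + 1 - x % 2 := by
      rw [Ffun, ← hadef, if_neg hmoved]
    rw [e, hτβ, beta_div2]
    rcases (by omega : x % 2 = 0 ∨ x % 2 = 1) with h0 | h0
    · rw [show x = 2*a from by omega, ← hddef]; omega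
    · rw [show x = 2*a+1 from by omega, hstep hfix a, ← hddef]
      unfold tf; split <;> omega

include h1 h2 h4 hfix in
lemma G_supp : ∀ m, ((G_invol h1 h4 hfix).toPerm) m ≠ m
    → m ∈ (Finset.range n).image beta := by
  intro m hm
  have hgapp : ((G_invol h1 h4 hfix).toPerm) m = Gfun σ m := rfl
  rw [hgapp] at hm
  by_cases hp : m % 4 = 0 ∨ m % 4 = 3
  · have hba : beta (m/2) = m := beta_of_mod hp
    by_cases hd : σ (2*(m/2)) = 2*(m/2)
    · exfalso
      exact hm (by rw [Gfun, if_pos hp, hd, show 2*(m/2)/2 = m/2 from by omega, hba])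
    · have := h2 _ hd
      simp only [Finset.mem_range] at this
      exact Finset.mem_image.2 ⟨m/2, Finset.mem_range.2 (by omega), hba⟩
  · exact absurd (by rw [Gfun, if_neg hp]) hm

end G

section G2
variable {n : ℕ} {σ : Equiv.Perm ℕ} (h1 : σ * σ = 1)
  (h2 : ∀ x, σ x ≠ x → x ∈ Finset.range (2*n))
  (h4 : ∀ c, σ c ≠ c → c + σ c ∈ Jstar)
  (hfix : tp * σ * tp = σ)

omit h2 in
include h1 h4 hfix in
lemma G_sum : ∀ c, ((G_invol h1 h4 hfix).toPerm) c ≠ c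
    → c + ((G_invol h1 h4 hfix).toPerm) c ∈ Jstar := by
  intro c hc
  have hgapp : ((G_invol h1 h4 hfix).toPerm) c = Gfun σ c := rfl
  rw [hgapp] at hc ⊢
  by_cases hp : c % 4 = 0 ∨ c % 4 = 3
  · have hba : beta (c/2) = c := beta_of_mod hp
    set a := c / 2 with hadef
    by_cases hd : σ (2*a) = 2*a
    · exfalso
      exact hc (by rw [Gfun, if_pos hp, ← hadef, hd, show 2*a/2 = a from by omega, hba])
    · obtain ⟨hodd, hne⟩ := G_odd h4 hd
      set d := σ (2*a) with hddef
      set b := d / 2 with hbdef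
      have hmem := h4 _ hd
      have hd4 := jstar_mod4 hmem
      have hgc : Gfun σ c = beta b := by rw [Gfun, if_pos hp]
      rw [hgc]
      have hm2 : (beta a + beta b) % 2 = 1 := by
        have e1 := beta_mod2 a
        have e2 := beta_mod2 b
        omega
      have hab := beta_add hm2
      have e : c + beta b = 2*a + d := by
        rw [← hba, hab]; omega
      rw [e]
      exact hmem
  · exact absurd (by rw [Gfun, if_neg hp]) hc

include h1 h2 h4 hfix in
lemma G_card {K : ℕ}
    (h3 : ((Finset.range (2*n)).filter fun x => σ x ≠ x).card = 2*K) :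
    (((Finset.range n).image beta).filter
      fun m => ((G_invol h1 h4 hfix).toPerm) m ≠ m).card = K := by
  have hτinv : ∀ x, ((G_invol h1 h4 hfix).toPerm) (((G_invol h1 h4 hfix).toPerm) x) = x :=
    fun x => G_invol h1 h4 hfix x
  have hτsupp := G_supp h1 h2 h4 hfix
  have hcr := card_rel (n := n) hτinv hτsupp
  have e1 : ((Finset.range (2*n)).filter fun x => Ffun ((G_invol h1 h4 hfix).toPerm) x ≠ x)
      = (Finset.range (2*n)).filter fun x => σ x ≠ x := by
    apply Finset.filter_congr
    intro x _
    rw [FG h1 h4 hfix]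
  rw [e1, h3] at hcr
  omega

end G2

lemma GF {n : ℕ} {τ : Equiv.Perm ℕ} (hinv : ∀ x, τ (τ x) = x)
    (hsupp : ∀ m, τ m ≠ m → m ∈ (Finset.range n).image beta) (m : ℕ) :
    Gfun ((Ffun_invol hinv hsupp).toPerm) m = τ m := by
  have happ : ∀ x, ((Ffun_invol hinv hsupp).toPerm) x = Ffun τ x := fun _ => rfl
  by_cases hp : m % 4 = 0 ∨ m % 4 = 3
  · have hba : beta (m/2) = m := beta_of_mod hp
    set a := m / 2 with hadef
    rw [Gfun, if_pos hp, ← hadef, happ]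
    by_cases h : τ (beta a) = beta a
    · have e : Ffun τ (2*a) = 2*a := by
        rw [Ffun, show (2*a)/2 = a from by omega, if_pos h]
      rw [e, show (2*a)/2 = a from by omega, hba, ← hba, h]
    · obtain ⟨hb, hne⟩ := moved_form hinv hsupp h
      have e : Ffun τ (2*a) = 2 * (τ (beta a) / 2) + 1 - (2*a) % 2 := by
        rw [Ffun, show (2*a)/2 = a from by omega, if_neg h]
      rw [e, show (2 * (τ (beta a) / 2) + 1 - (2*a) % 2) / 2 = τ (beta a) / 2 from by omega,
        hb, ← hba]
  · rw [Gfun, if_neg hp]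
    by_contra hne
    have hmoved : τ m ≠ m := fun hc => hne hc.symm
    obtain ⟨b, _, hbm⟩ := Finset.mem_image.1 (hsupp _ hmoved)
    exact hp (hbm ▸ beta_mem b)


lemma mu_eq (A : Finset ℕ) (k : ℕ) (B : Set ℕ) :
    mu A k B = Nat.card {σ : Equiv.Perm ℕ // Cpred A k B σ} := rfl

theorem stmt_12 (n k : ℕ) (hn : 1 ≤ n) :
    (Odd k → mu (Finset.range (2 * n)) k Jstar ≡ 0 [MOD 2]) ∧
    (Even k → mu (Finset.range (2 * n)) k Jstar ≡ mu (smallest Pset n) (k / 2) Jstar [MOD 2]) := by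
  classical
  rw [mu_eq, mu_eq, smallest_Pset]
  set S := {σ : Equiv.Perm ℕ // Cpred (Finset.range (2*n)) k Jstar σ} with hS
  let Φ : S → S := fun σh => ⟨tp * σh.1 * tp, conj_Cpred σh.2⟩
  have hΦ : Function.Involutive Φ := by
    intro σh
    apply Subtype.ext
    show tp * (tp * σh.1 * tp) * tp = σh.1
    have htp : tp * tp = 1 := mul_self_of_invol tf_invol
    calc tp * (tp * σh.1 * tp) * tp = (tp * tp) * σh.1 * (tp * tp) := by group
    _ = σh.1 := by rw [htp, one_mul, mul_one]
  have hparity := natCard_modEq_fixed Φ hΦ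
  have hfixcard : Nat.card {x : S // Φ x = x}
      = Nat.card {σ : Equiv.Perm ℕ // Cpred (Finset.range (2*n)) k Jstar σ
          ∧ tp * σ * tp = σ} := by
    apply Nat.card_congr
    refine ⟨fun x => ⟨x.1.1, x.1.2, congrArg Subtype.val x.2⟩,
      fun y => ⟨⟨y.1, y.2.1⟩, Subtype.ext y.2.2⟩, fun x => ?_, fun y => rfl⟩
    apply Subtype.ext; apply Subtype.ext; rfl
  rw [hfixcard] at hparity
  constructor
  · intro hodd
    have hzero : Nat.card {σ : Equiv.Perm ℕ // Cpred (Finset.range (2*n)) k Jstar σ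
        ∧ tp * σ * tp = σ} = 0 := by
      rw [Nat.card_eq_zero]
      left
      constructor
      rintro ⟨σ, ⟨c1, c2, c3, c4⟩, hfx⟩
      have hK := G_card c1 c2 c4 hfx c3
      have heven : Even k := by
        rw [← hK]
        apply even_card_invol _ (fun m => ((G_invol c1 c4 hfx).toPerm) m)
        · intro a ha
          simp only [Finset.mem_filter] at ha ⊢
          refine ⟨G_supp c1 c2 c4 hfx _ ?_, ?_⟩
          · rw [show ∀ x, ((G_invol c1 c4 hfx).toPerm) (((G_invol c1 c4 hfx).toPerm) x) = x
              from fun x => G_invol c1 c4 hfx x]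
            exact Ne.symm ha.2
          · rw [show ((G_invol c1 c4 hfx).toPerm) (((G_invol c1 c4 hfx).toPerm) a) = a
              from G_invol c1 c4 hfx a]
            exact Ne.symm ha.2
        · intro a _; exact G_invol c1 c4 hfx a
        · intro a ha; exact (Finset.mem_filter.1 ha).2
      rw [← Nat.not_odd_iff_even] at heven
      exact heven hodd
    rw [hzero] at hparity
    exact hparity
  · intro heven
    obtain ⟨k', hk⟩ := heven
    have hk2 : k / 2 = k' := by omega
    have hkk : k = 2 * k' := by omega
    rw [hk2]
    have hcards : Nat.card {τ : Equiv.Perm ℕ // Cpred ((Finset.range n).image beta) k' Jstar τ}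
        = Nat.card {σ : Equiv.Perm ℕ // Cpred (Finset.range (2*n)) k Jstar σ
            ∧ tp * σ * tp = σ} := by
      apply Nat.card_eq_of_bijective
        (fun τh => ⟨(Ffun_invol (fun x => invol_apply τh.2.1 x) τh.2.2.1).toPerm,
          by rw [hkk]; exact (F_Cpred τh.2).1, (F_Cpred τh.2).2⟩)
      constructor
      · rintro ⟨τ1, hτ1⟩ ⟨τ2, hτ2⟩ h
        have hval := congrArg Subtype.val h
        simp only at hval
        apply Subtype.ext
        apply Equiv.ext
        intro m
        have e1 := GF (fun x => invol_apply hτ1.1 x) hτ1.2.1 m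
        have e2 := GF (fun x => invol_apply hτ2.1 x) hτ2.2.1 m
        rw [← e1, ← e2]
        exact congrArg (fun σ => Gfun σ m) hval
      · rintro ⟨σ, ⟨c1, c2, c3, c4⟩, hfx⟩
        refine ⟨⟨(G_invol c1 c4 hfx).toPerm,
          mul_self_of_invol _, G_supp c1 c2 c4 hfx,
          by rw [← hkk]; exact G_card c1 c2 c4 hfx c3, G_sum c1 c4 hfx⟩, ?_⟩
        apply Subtype.ext
        apply Equiv.ext
        intro x
        exact FG c1 c4 hfx x
    rw [← hcards] at hparity
    exact hparity
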